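/- Consider an n-player tournament with chip fractions x₁, …, x_n > 0 summing to 1 and prizes m₁ = m₂ = 1 and m₃ = ⋯ = m_n = 0 (each of the top two finishers is paid 1). Let S ⊆ {1, …, n} be a set of at least two players, with player c ∉ S, engaging in a fair bet: for each j ∈ S let W_j be a real random variable taking finitely many values, jointly satisfying Σ_{j∈S} W_j = 0 almost surely, E[W_j] = 0 for each j, not all W_j almost surely 0, and 0 < x_j + W_j and Σ_{j∈S}(x_j + W_j) < 1 − Σ_{i∉S} x_i + Σ_{j∈S} x_j almost surely (i.e., all post-bet fractions remain in (0,1) with total 1). Then player c's ICM expected prize money strictly increases after the bet. -/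

import Mathlib

open MeasureTheory
open scoped ProbabilityTheory

/-- ICM probability that given players holding chip fractions `l = [x₁, …, x_k]`
finish 1st through kth in that order. -/
noncomputable def icmP (l : List ℝ) : ℝ :=
  l.prod / ∏ i ∈ Finset.range (l.length - 1), (1 - ((l.take (i + 1)).sum))

/-- ICM expected prize money of player `i` in an `n`-player tournament with
prizes `m₁, …, m_n` and chip fractions `x₁, …, x_n`. -/
noncomputable def icmEV {n : ℕ} (m : Fin n → ℝ) (x : Fin n → ℝ) (i : Fin n) : ℝ :=
  ∑ σ : Equiv.Perm (Fin n), m (σ.symm i) * icmP (List.ofFn fun j => x (σ j))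

noncomputable def auxH (t : ℝ) (l : List ℝ) : ℝ :=
  l.prod / ∏ i ∈ Finset.range l.length, (t - (l.take i).sum)

lemma auxH_nil (t : ℝ) : auxH t ([] : List ℝ) = 1 := by simp [auxH]

lemma auxH_cons (t a : ℝ) (l : List ℝ) : auxH t (a :: l) = a / t * auxH (t - a) l := by
  simp only [auxH, List.prod_cons, List.length_cons]
  rw [Finset.prod_range_succ']
  simp only [List.take_succ_cons, List.take_zero, List.sum_cons, List.sum_nil, sub_zero]
  rw [div_mul_div_comm]
  congr 1
  rw [mul_comm]
  congr 1
  exact Finset.prod_congr rfl fun i _ => by ring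

lemma icmP_eq_auxH (l : List ℝ) : icmP l = auxH 1 l := by
  cases l with
  | nil => simp [icmP, auxH]
  | cons a l =>
    simp only [icmP, auxH, List.length_cons, Nat.add_sub_cancel]
    rw [Finset.prod_range_succ']
    simp

lemma sum_swap_succ {n : ℕ} (y : Fin (n + 1) → ℝ) (p : Fin (n + 1)) :
    ∑ i : Fin n, y (Equiv.swap 0 p i.succ) = (∑ i, y i) - y p := by
  have h := Equiv.sum_comp (Equiv.swap 0 p) y
  rw [Fin.sum_univ_succ] at h
  rw [Equiv.swap_apply_left] at h
  linarith

lemma ofFn_decompose {n : ℕ} (y : Fin (n + 1) → ℝ) (p : Fin (n + 1)) (τ : Equiv.Perm (Fin n)) :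
    List.ofFn (y ∘ (Equiv.Perm.decomposeFin.symm (p, τ)))
      = y p :: List.ofFn ((fun i => y (Equiv.swap 0 p i.succ)) ∘ τ) := by
  rw [List.ofFn_succ]
  congr 1
  · simp
  · congr 1
    funext i
    simp [Equiv.Perm.decomposeFin_symm_apply_succ]

lemma sum_auxH (n : ℕ) : ∀ (t : ℝ) (y : Fin n → ℝ), (∀ i, 0 < y i) → (∑ i, y i = t) →
    ∑ σ : Equiv.Perm (Fin n), auxH t (List.ofFn (y ∘ σ)) = 1 := by
  induction n with
  | zero =>
    intro t y hy hs
    have : ∀ σ : Equiv.Perm (Fin 0), auxH t (List.ofFn (y ∘ σ)) = 1 := fun σ => by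
      simp [auxH_nil]
    rw [Finset.sum_congr rfl (fun σ _ => this σ)]
    simp [Finset.card_univ]
  | succ n ih =>
    intro t y hy hs
    have ht : 0 < t := by
      rw [← hs]; exact Finset.sum_pos (fun i _ => hy i) Finset.univ_nonempty
    rw [← Equiv.sum_comp (Equiv.Perm.decomposeFin).symm
      (fun σ => auxH t (List.ofFn (y ∘ σ))), Fintype.sum_prod_type]
    have key : ∀ p : Fin (n + 1), ∑ τ : Equiv.Perm (Fin n),
        auxH t (List.ofFn (y ∘ (Equiv.Perm.decomposeFin.symm (p, τ)))) = y p / t := by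
      intro p
      have hrw : ∀ τ : Equiv.Perm (Fin n),
          auxH t (List.ofFn (y ∘ (Equiv.Perm.decomposeFin.symm (p, τ))))
            = y p / t * auxH (t - y p) (List.ofFn ((fun i => y (Equiv.swap 0 p i.succ)) ∘ τ)) :=
        fun τ => by rw [ofFn_decompose, auxH_cons]
      rw [Finset.sum_congr rfl fun τ _ => hrw τ, ← Finset.mul_sum,
        ih (t - y p) _ (fun i => hy _) (by rw [sum_swap_succ, hs]), mul_one]
    rw [Finset.sum_congr rfl fun p _ => key p, ← Finset.sum_div, hs, div_self (ne_of_gt ht)]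

lemma sum_auxH_fix (n : ℕ) (t : ℝ) (y : Fin (n + 1) → ℝ) (hy : ∀ i, 0 < y i)
    (hs : ∑ i, y i = t) (d : Fin (n + 1)) :
    ∑ σ : Equiv.Perm (Fin (n + 1)), (if σ 0 = d then auxH t (List.ofFn (y ∘ σ)) else 0)
      = y d / t := by
  rw [← Equiv.sum_comp (Equiv.Perm.decomposeFin).symm
    (fun σ => if σ 0 = d then auxH t (List.ofFn (y ∘ σ)) else 0), Fintype.sum_prod_type]
  have key : ∀ p : Fin (n + 1), ∑ τ : Equiv.Perm (Fin n),
      (if (Equiv.Perm.decomposeFin.symm (p, τ)) 0 = d then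
        auxH t (List.ofFn (y ∘ (Equiv.Perm.decomposeFin.symm (p, τ)))) else 0)
      = if p = d then y p / t else 0 := by
    intro p
    by_cases hpd : p = d
    · subst hpd
      have hc : ∀ τ : Equiv.Perm (Fin n), (Equiv.Perm.decomposeFin.symm (p, τ)) 0 = p :=
        fun τ => Equiv.Perm.decomposeFin_symm_apply_zero p τ
      have hrw : ∀ τ : Equiv.Perm (Fin n),
          auxH t (List.ofFn (y ∘ (Equiv.Perm.decomposeFin.symm (p, τ))))
            = y p / t * auxH (t - y p) (List.ofFn ((fun i => y (Equiv.swap 0 p i.succ)) ∘ τ)) :=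
        fun τ => by rw [ofFn_decompose, auxH_cons]
      rw [if_pos rfl,
        Finset.sum_congr rfl fun τ _ => (by rw [hc τ, if_pos rfl, hrw τ] :
          (if (Equiv.Perm.decomposeFin.symm (p, τ)) 0 = p then
            auxH t (List.ofFn (y ∘ (Equiv.Perm.decomposeFin.symm (p, τ)))) else 0)
          = y p / t * auxH (t - y p) (List.ofFn ((fun i => y (Equiv.swap 0 p i.succ)) ∘ τ))),
        ← Finset.mul_sum,
        sum_auxH n (t - y p) _ (fun i => hy _) (by rw [sum_swap_succ, hs]), mul_one]
    · simp [Equiv.Perm.decomposeFin_symm_apply_zero, hpd]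
  rw [Finset.sum_congr rfl fun p _ => key p, Finset.sum_ite_eq' Finset.univ d (fun p => y p / t)]
  simp

lemma sum_auxH_fix1 (n : ℕ) (t : ℝ) (y : Fin (n + 2) → ℝ) (hy : ∀ i, 0 < y i)
    (hs : ∑ i, y i = t) (c : Fin (n + 2)) :
    ∑ σ : Equiv.Perm (Fin (n + 2)), (if σ 1 = c then auxH t (List.ofFn (y ∘ σ)) else 0)
      = ∑ p, (if p = c then 0 else y p / t * (y c / (t - y p))) := by
  rw [← Equiv.sum_comp (Equiv.Perm.decomposeFin).symm
    (fun σ => if σ 1 = c then auxH t (List.ofFn (y ∘ σ)) else 0), Fintype.sum_prod_type]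
  refine Finset.sum_congr rfl fun p _ => ?_
  have hone : (1 : Fin (n + 2)) = Fin.succ 0 := rfl
  have happ : ∀ τ : Equiv.Perm (Fin (n + 1)),
      (Equiv.Perm.decomposeFin.symm (p, τ)) 1 = Equiv.swap 0 p ((τ 0).succ) := by
    intro τ
    rw [hone, Equiv.Perm.decomposeFin_symm_apply_succ]
  by_cases hpc : p = c
  · subst hpc
    rw [if_pos rfl]
    refine Finset.sum_eq_zero fun τ _ => ?_
    rw [happ τ, if_neg ?_]
    rw [Equiv.swap_apply_eq_iff, Equiv.swap_apply_right]
    exact Fin.succ_ne_zero _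
  · rw [if_neg hpc]
    have hsw : Equiv.swap (0 : Fin (n+2)) p c ≠ 0 := by
      rw [Ne, Equiv.swap_apply_eq_iff, Equiv.swap_apply_left]
      exact fun h => hpc h.symm
    obtain ⟨d, hd⟩ := Fin.eq_succ_of_ne_zero hsw
    have hcond : ∀ τ : Equiv.Perm (Fin (n + 1)),
        ((Equiv.Perm.decomposeFin.symm (p, τ)) 1 = c) ↔ (τ 0 = d) := by
      intro τ
      rw [happ τ, Equiv.swap_apply_eq_iff, hd, Fin.succ_inj]
    have hrw : ∀ τ : Equiv.Perm (Fin (n + 1)),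
        (if (Equiv.Perm.decomposeFin.symm (p, τ)) 1 = c then
          auxH t (List.ofFn (y ∘ (Equiv.Perm.decomposeFin.symm (p, τ)))) else 0)
        = y p / t * (if τ 0 = d then
            auxH (t - y p) (List.ofFn ((fun i => y (Equiv.swap 0 p i.succ)) ∘ τ)) else 0) := by
      intro τ
      by_cases h : τ 0 = d
      · rw [if_pos ((hcond τ).mpr h), if_pos h, ofFn_decompose, auxH_cons]
      · rw [if_neg (fun hh => h ((hcond τ).mp hh)), if_neg h, mul_zero]
    rw [Finset.sum_congr rfl fun τ _ => hrw τ, ← Finset.mul_sum,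
      sum_auxH_fix n (t - y p) _ (fun i => hy _) (by rw [sum_swap_succ, hs]) d]
    have : y (Equiv.swap 0 p d.succ) = y c := by rw [← hd, Equiv.swap_apply_self]
    rw [this]

lemma icmEV_closed (n : ℕ) (x : Fin (n + 2) → ℝ) (hx : ∀ i, 0 < x i)
    (hxsum : ∑ i, x i = 1) (c : Fin (n + 2)) :
    icmEV (fun j : Fin (n + 2) => if (j : ℕ) < 2 then (1 : ℝ) else 0) x c
      = x c + ∑ p, (if p = c then 0 else x p * x c / (1 - x p)) := by
  have hm : ∀ σ : Equiv.Perm (Fin (n + 2)),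
      (if ((σ.symm c : Fin (n + 2)) : ℕ) < 2 then (1 : ℝ) else 0)
        = (if σ 0 = c then (1 : ℝ) else 0) + (if σ 1 = c then (1 : ℝ) else 0) := by
    intro σ
    have e0 : σ 0 = c ↔ σ.symm c = 0 := by
      rw [Equiv.apply_eq_iff_eq_symm_apply, eq_comm]
    have e1 : σ 1 = c ↔ σ.symm c = 1 := by
      rw [Equiv.apply_eq_iff_eq_symm_apply, eq_comm]
    have hlt : ((σ.symm c : Fin (n + 2)) : ℕ) < 2 ↔ (σ.symm c = 0 ∨ σ.symm c = 1) := by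
      rw [Fin.ext_iff, Fin.ext_iff]
      have h0 : ((0 : Fin (n + 2)) : ℕ) = 0 := rfl
      have h1 : ((1 : Fin (n + 2)) : ℕ) = 1 := rfl
      rw [h0, h1]
      omega
    have hne : ¬(σ.symm c = 0 ∧ σ.symm c = 1) := by
      rintro ⟨a, b⟩
      rw [a] at b
      exact absurd b.symm (by simp)
    by_cases h0 : σ.symm c = 0 <;> by_cases h1 : σ.symm c = 1
    · exact absurd ⟨h0, h1⟩ hne
    · simp [hlt, e0, e1, h0, h1]
    · simp [hlt, e0, e1, h0, h1]
    · simp [hlt, e0, e1, h0, h1]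
  unfold icmEV
  have : ∀ σ : Equiv.Perm (Fin (n + 2)),
      (if ((σ.symm c : Fin (n + 2)) : ℕ) < 2 then (1 : ℝ) else 0)
          * icmP (List.ofFn fun j => x (σ j))
        = (if σ 0 = c then auxH 1 (List.ofFn (x ∘ σ)) else 0)
          + (if σ 1 = c then auxH 1 (List.ofFn (x ∘ σ)) else 0) := by
    intro σ
    rw [hm σ, add_mul, ite_mul, ite_mul, one_mul, zero_mul, icmP_eq_auxH]
    rfl
  rw [Finset.sum_congr rfl fun σ _ => this σ, Finset.sum_add_distrib,
    sum_auxH_fix (n + 1) 1 x hx hxsum c, sum_auxH_fix1 n 1 x hx hxsum c, div_one]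
  congr 1
  refine Finset.sum_congr rfl fun p _ => ?_
  by_cases h : p = c <;> simp [h, div_one, mul_div_assoc]

noncomputable def deltaFn (xc xj w : ℝ) : ℝ :=
  (xj + w) * xc / (1 - (xj + w)) - xj * xc / (1 - xj)

noncomputable def qFn (xc xj w : ℝ) : ℝ := xc * w ^ 2 / ((1 - xj - w) * (1 - xj) ^ 2)

noncomputable def lFn (xc xj w : ℝ) : ℝ := w * (xc / (1 - xj) ^ 2)

lemma delta_decomp (xc xj w : ℝ) (h1 : 1 - xj ≠ 0) (h2 : 1 - xj - w ≠ 0) :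
    deltaFn xc xj w = lFn xc xj w + qFn xc xj w := by
  unfold deltaFn lFn qFn
  have h3 : 1 - (xj + w) ≠ 0 := by intro h; exact h2 (by linarith [h])
  field_simp
  ring

lemma measurable_deltaFn (xc xj : ℝ) : Measurable (fun w => deltaFn xc xj w) := by
  unfold deltaFn
  have m1 : Measurable fun w : ℝ => xj + w := measurable_const.add measurable_id
  exact ((m1.mul_const xc).div (m1.const_sub 1)).sub_const _

lemma measurable_qFn (xc xj : ℝ) : Measurable (fun w => qFn xc xj w) := by
  unfold qFn
  exact (measurable_const.mul (measurable_id.pow_const 2)).div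
    ((measurable_id.const_sub (1 - xj)).mul_const _)

lemma measurable_lFn (xc xj : ℝ) : Measurable (fun w => lFn xc xj w) :=
  measurable_id.mul_const _

lemma integrable_comp_finite {Ω : Type*} [MeasureSpace Ω] [IsFiniteMeasure (ℙ : Measure Ω)]
    {W : Ω → ℝ} (hm : Measurable W) (hfin : (Set.range W).Finite)
    {h : ℝ → ℝ} (hh : Measurable h) :
    Integrable (fun ω => h (W ω)) := by
  have hsub : Set.range (fun ω => h (W ω)) ⊆ h '' Set.range W := by
    rintro _ ⟨ω, rfl⟩; exact ⟨W ω, ⟨ω, rfl⟩, rfl⟩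
  have hfin2 : (Set.range (fun ω => h (W ω))).Finite := (hfin.image h).subset hsub
  obtain ⟨C, hC⟩ := hfin2.bddAbove
  obtain ⟨D, hD⟩ := hfin2.bddBelow
  refine ⟨(hh.comp hm).aestronglyMeasurable, HasFiniteIntegral.of_bounded (C := max C (-D)) ?_⟩
  filter_upwards with ω
  have h1 := hC (Set.mem_range_self (f := fun ω => h (W ω)) ω)
  have h2 := hD (Set.mem_range_self (f := fun ω => h (W ω)) ω)
  rw [Real.norm_eq_abs, abs_le]
  constructor
  · have := le_max_right C (-D); linarith
  · have := le_max_left C (-D); linarith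

/-- When only the top two places are paid (1 each), a fair bet among any set `S`
of two or more players strictly raises the ICM expected prize money of any
player `c ∉ S` not involved in the bet. -/
theorem icm_two_places_paid_bystander_gains
    {Ω : Type*} [MeasureSpace Ω] [IsProbabilityMeasure (ℙ : Measure Ω)]
    (n : ℕ) (x : Fin n → ℝ) (hx : ∀ i, 0 < x i) (hxsum : ∑ i, x i = 1)
    (S : Finset (Fin n)) (hS : 2 ≤ S.card) (c : Fin n) (hc : c ∉ S)
    (W : Fin n → Ω → ℝ)
    (hWmeas : ∀ j, Measurable (W j)) (hWfin : ∀ j, (Set.range (W j)).Finite)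
    (hWsum : ∀ᵐ ω ∂ℙ, ∑ j ∈ S, W j ω = 0)
    (hWmean : ∀ j ∈ S, ∫ ω, W j ω = 0)
    (hWne : ¬ ∀ j ∈ S, ∀ᵐ ω ∂ℙ, W j ω = 0)
    (hWbound : ∀ᵐ ω ∂ℙ, (∀ j ∈ S, 0 < x j + W j ω)
      ∧ ∑ j ∈ S, (x j + W j ω) < 1 - ∑ i ∈ Sᶜ, x i + ∑ j ∈ S, x j) :
    icmEV (fun j : Fin n => if (j : ℕ) < 2 then (1 : ℝ) else 0) x c
      < ∫ ω, icmEV (fun j : Fin n => if (j : ℕ) < 2 then (1 : ℝ) else 0)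
          (fun j => if j ∈ S then x j + W j ω else x j) c := by
  classical
  have hn2 : 2 ≤ n := by
    have h1 : S.card ≤ Finset.univ.card := Finset.card_le_univ S
    rw [Finset.card_univ, Fintype.card_fin] at h1
    omega
  obtain ⟨k, rfl⟩ : ∃ k, n = k + 2 := ⟨n - 2, by omega⟩
  -- each chip fraction is < 1
  have hxlt : ∀ i, x i < 1 := by
    intro i
    have he : (Finset.univ.erase i).Nonempty := by
      rw [← Finset.card_pos, Finset.card_erase_of_mem (Finset.mem_univ i),
        Finset.card_univ, Fintype.card_fin]
      omega
    have hpos : 0 < ∑ j ∈ Finset.univ.erase i, x j :=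
      Finset.sum_pos (fun j _ => hx j) he
    have h := Finset.sum_erase_add Finset.univ x (Finset.mem_univ i)
    rw [hxsum] at h
    linarith
  -- sum over S is at most 1 - x c
  have hxS : ∑ j ∈ S, x j ≤ 1 - x c := by
    have h1 : ∑ j ∈ insert c S, x j ≤ ∑ j, x j :=
      Finset.sum_le_sum_of_subset_of_nonneg (Finset.subset_univ _)
        (fun j _ _ => (hx j).le)
    rw [Finset.sum_insert hc, hxsum] at h1
    linarith
  have hxc : 0 < x c := hx c
  -- a.e. every post-bet stack in S is in (0, 1)
  have hae : ∀ᵐ ω ∂ℙ, ∀ j ∈ S, 0 < x j + W j ω ∧ x j + W j ω < 1 := by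
    filter_upwards [hWsum, hWbound] with ω h0 h1
    intro j hj
    refine ⟨h1.1 j hj, ?_⟩
    have hsum : ∑ l ∈ S, (x l + W l ω) = ∑ l ∈ S, x l := by
      rw [Finset.sum_add_distrib, h0, add_zero]
    have herase : (S.erase j).Nonempty := by
      rw [← Finset.card_pos, Finset.card_erase_of_mem hj]; omega
    have hpos : 0 < ∑ l ∈ S.erase j, (x l + W l ω) :=
      Finset.sum_pos (fun l hl => h1.1 l (Finset.mem_of_mem_erase hl)) herase
    have hsplit : x j + W j ω + ∑ l ∈ S.erase j, (x l + W l ω) = ∑ l ∈ S, (x l + W l ω) :=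
      Finset.add_sum_erase S (fun l => x l + W l ω) hj
    have : x j + W j ω < ∑ l ∈ S, x l := by
      rw [← hsum]
      linarith [hsplit]
    linarith
  -- the post-bet profile and its closed form
  have hpost : ∀ᵐ ω ∂ℙ,
      icmEV (fun j : Fin (k + 2) => if (j : ℕ) < 2 then (1 : ℝ) else 0)
        (fun j => if j ∈ S then x j + W j ω else x j) c
      = x c + ∑ p, (if p = c then 0 else
          (if p ∈ S then x p + W p ω else x p) * x c
            / (1 - (if p ∈ S then x p + W p ω else x p))) := by
    filter_upwards [hWsum, hae] with ω h0 h1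
    have hpos : ∀ j, 0 < (if j ∈ S then x j + W j ω else x j) := by
      intro j
      by_cases hj : j ∈ S
      · simpa [hj] using (h1 j hj).1
      · simpa [hj] using hx j
    have hsum1 : ∑ j, (if j ∈ S then x j + W j ω else x j) = 1 := by
      rw [← Finset.sum_add_sum_compl S (fun j => if j ∈ S then x j + W j ω else x j)]
      have e1 : ∑ j ∈ S, (if j ∈ S then x j + W j ω else x j) = ∑ j ∈ S, x j := by
        rw [Finset.sum_congr rfl fun j hj => if_pos hj, Finset.sum_add_distrib, h0, add_zero]
      have e2 : ∑ j ∈ Sᶜ, (if j ∈ S then x j + W j ω else x j) = ∑ j ∈ Sᶜ, x j := by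
        refine Finset.sum_congr rfl fun j hj => if_neg ?_
        simpa [Finset.mem_compl] using hj
      rw [e1, e2, Finset.sum_add_sum_compl S x, hxsum]
    have := icmEV_closed k _ hpos hsum1 c
    rw [this, if_neg hc]
  -- decompose post-bet EV as pre-bet EV plus bet deltas
  have hdecomp : ∀ ω : Ω,
      (x c + ∑ p, (if p = c then 0 else
          (if p ∈ S then x p + W p ω else x p) * x c
            / (1 - (if p ∈ S then x p + W p ω else x p))))
      = (x c + ∑ p, (if p = c then 0 else x p * x c / (1 - x p)))
        + ∑ j ∈ S, deltaFn (x c) (x j) (W j ω) := by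
    intro ω
    have key : ∑ j ∈ S, deltaFn (x c) (x j) (W j ω)
        = ∑ p, ((if p = c then 0 else
            (if p ∈ S then x p + W p ω else x p) * x c
              / (1 - (if p ∈ S then x p + W p ω else x p)))
          - (if p = c then 0 else x p * x c / (1 - x p))) := by
      rw [eq_comm, ← Finset.sum_subset (Finset.subset_univ S)]
      · refine Finset.sum_congr rfl fun p hp => ?_
        have hpc : p ≠ c := fun h => hc (h ▸ hp)
        rw [if_neg hpc, if_neg hpc, if_pos hp]
        unfold deltaFn
        ring
      · intro p _ hp
        by_cases hpc : p = c
        · simp [hpc]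
        · rw [if_neg hpc, if_neg hpc, if_neg hp, sub_self]
    rw [key, Finset.sum_sub_distrib]
    ring
  -- integrability
  have hIdelta : ∀ j, Integrable (fun ω => deltaFn (x c) (x j) (W j ω)) ℙ :=
    fun j => integrable_comp_finite (hWmeas j) (hWfin j) (measurable_deltaFn _ _)
  have hIq : ∀ j, Integrable (fun ω => qFn (x c) (x j) (W j ω)) ℙ :=
    fun j => integrable_comp_finite (hWmeas j) (hWfin j) (measurable_qFn _ _)
  have hIl : ∀ j, Integrable (fun ω => lFn (x c) (x j) (W j ω)) ℙ :=
    fun j => integrable_comp_finite (hWmeas j) (hWfin j) (measurable_lFn _ _)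
  -- integral of delta equals integral of q
  have hdq : ∀ j ∈ S, ∫ ω, deltaFn (x c) (x j) (W j ω)
      = ∫ ω, qFn (x c) (x j) (W j ω) := by
    intro j hj
    have hae2 : (fun ω => deltaFn (x c) (x j) (W j ω))
        =ᵐ[ℙ] fun ω => lFn (x c) (x j) (W j ω) + qFn (x c) (x j) (W j ω) := by
      filter_upwards [hae] with ω h1
      exact delta_decomp _ _ _ (by have := hxlt j; intro h; linarith)
        (by have := (h1 j hj).2; intro h; linarith)
    rw [integral_congr_ae hae2, integral_add (hIl j) (hIq j)]
    have : ∫ ω, lFn (x c) (x j) (W j ω) = 0 := by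
      unfold lFn
      rw [integral_mul_const, hWmean j hj, zero_mul]
    rw [this, zero_add]
  -- each q-integral is nonnegative
  have hqnonneg : ∀ j ∈ S, 0 ≤ ∫ ω, qFn (x c) (x j) (W j ω) := by
    intro j hj
    refine integral_nonneg_of_ae ?_
    filter_upwards [hae] with ω h1
    have h2 := (h1 j hj).2
    have h3 : 0 < 1 - x j - W j ω := by linarith
    have h4 : 0 < 1 - x j := by linarith [hxlt j, hx j]
    unfold qFn
    positivity
  -- some q-integral is positive
  push_neg at hWne
  obtain ⟨j₀, hj₀, hj₀ne⟩ := hWne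
  have hqpos : 0 < ∫ ω, qFn (x c) (x j₀) (W j₀ ω) := by
    have haeq : 0 ≤ᵐ[ℙ] fun ω => qFn (x c) (x j₀) (W j₀ ω) := by
      filter_upwards [hae] with ω h1
      have h2 := (h1 j₀ hj₀).2
      have h3 : 0 < 1 - x j₀ - W j₀ ω := by linarith
      have h4 : 0 < 1 - x j₀ := by linarith [hxlt j₀, hx j₀]
      unfold qFn
      positivity
    rw [integral_pos_iff_support_of_nonneg_ae haeq (hIq j₀)]
    rw [pos_iff_ne_zero]
    intro hzero
    apply hj₀ne
    have hq0 : ∀ᵐ ω ∂ℙ, qFn (x c) (x j₀) (W j₀ ω) = 0 := by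
      rw [ae_iff]
      convert hzero using 2
      rfl
    filter_upwards [hq0, hae] with ω h0 h1
    have h2 := (h1 j₀ hj₀).2
    have h3 : 0 < 1 - x j₀ - W j₀ ω := by linarith
    have h4 : 0 < 1 - x j₀ := by linarith [hxlt j₀, hx j₀]
    unfold qFn at h0
    rcases div_eq_zero_iff.mp h0 with h | h
    · rcases mul_eq_zero.mp h with h' | h'
      · exact absurd h' (ne_of_gt hxc)
      · exact not_not.mpr (pow_eq_zero_iff (two_ne_zero) |>.mp h')
    · exact absurd h (by positivity)
  -- assemble
  have hEVpre := icmEV_closed k x hx hxsum c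
  have hRHS : ∫ ω, icmEV (fun j : Fin (k + 2) => if (j : ℕ) < 2 then (1 : ℝ) else 0)
        (fun j => if j ∈ S then x j + W j ω else x j) c
      = (x c + ∑ p, (if p = c then 0 else x p * x c / (1 - x p)))
        + ∑ j ∈ S, ∫ ω, deltaFn (x c) (x j) (W j ω) := by
    have hcongr : (fun ω => icmEV (fun j : Fin (k + 2) => if (j : ℕ) < 2 then (1 : ℝ) else 0)
          (fun j => if j ∈ S then x j + W j ω else x j) c)
        =ᵐ[ℙ] fun ω => (x c + ∑ p, (if p = c then 0 else x p * x c / (1 - x p)))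
          + ∑ j ∈ S, deltaFn (x c) (x j) (W j ω) := by
      filter_upwards [hpost] with ω h0
      rw [h0, hdecomp ω]
    rw [integral_congr_ae hcongr, integral_add (integrable_const _)
      (integrable_finset_sum S fun j _ => hIdelta j), integral_const,
      integral_finset_sum S fun j _ => hIdelta j]
    simp
  rw [hEVpre, hRHS]
  have hsumpos : 0 < ∑ j ∈ S, ∫ ω, deltaFn (x c) (x j) (W j ω) := by
    rw [Finset.sum_congr rfl hdq]
    exact Finset.sum_pos' hqnonneg ⟨j₀, hj₀, hqpos⟩
  linarith
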